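/- Every extraspecial 2-group of order at least 2^5 has a section (quotient of a subgroup) isomorphic to the quaternion group Q_8 of order 8. -/

import Mathlib

open Subgroup Pointwise

/-- `A < B` is a chief factor of `G`. -/
def IsChiefFactor (G : Type*) [Group G] (A B : Subgroup G) : Prop :=
  A.Normal ∧ B.Normal ∧ A < B ∧
    ∀ N : Subgroup G, N.Normal → A ≤ N → N ≤ B → N = A ∨ N = B

/-- The order of the factor group `B/A`. -/
noncomputable def factorCard {G : Type*} [Group G] (A B : Subgroup G) : ℕ :=
  Nat.card B / Nat.card A

/-- A finite group is `p`-solvable if every chief factor is a `p`-group or a `p'`-group. -/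
def IsPSolvable (p : ℕ) (G : Type*) [Group G] : Prop :=
  ∀ A B : Subgroup G, IsChiefFactor G A B →
    (∃ n : ℕ, factorCard A B = p ^ n) ∨ ¬ p ∣ factorCard A B

/-- A finite group is `p`-supersolvable if it is `p`-solvable and every `p`-chief factor
has order `p`. -/
def IsPSupersolvable (p : ℕ) (G : Type*) [Group G] : Prop :=
  IsPSolvable p G ∧ ∀ A B : Subgroup G, IsChiefFactor G A B →
    p ∣ factorCard A B → factorCard A B = p

/-- A finite group is `p`-nilpotent if it has a normal Hall `p'`-subgroup. -/
def IsPNilpotent (p : ℕ) (G : Type*) [Group G] : Prop :=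
  ∃ H : Subgroup G, H.Normal ∧ ¬ p ∣ Nat.card H ∧ ∃ n : ℕ, H.index = p ^ n

/-- The quotient `G ⧸ N` is `p`-supersolvable (for `N` normal). -/
def QuotientIsPSupersolvable (p : ℕ) {G : Type*} [Group G] (N : Subgroup G) : Prop :=
  ∀ [N.Normal], IsPSupersolvable p (G ⧸ N)

/-- `R` is the `p`-supersolvable residual of `G`: the smallest normal subgroup with
`p`-supersolvable quotient. -/
def IsPSupersolvableResidual (p : ℕ) {G : Type*} [Group G] (R : Subgroup G) : Prop :=
  R.Normal ∧ QuotientIsPSupersolvable p R ∧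
    ∀ N : Subgroup G, N.Normal → QuotientIsPSupersolvable p N → R ≤ N

/-- the center `Z(K)` of a subgroup `K`, as a subgroup of the ambient group. -/
def centerOf {G : Type*} [Group G] (K : Subgroup G) : Subgroup G :=
  Subgroup.centralizer (K : Set G) ⊓ K

/-- `H` is c-embedded in `G` with respect to `K`: there is `B ≤ G` with `G = HB` and
`H ∩ B ≤ Z(K)`. -/
def IsCEmbedded {G : Type*} [Group G] (H K : Subgroup G) : Prop :=
  ∃ B : Subgroup G, (∀ g : G, ∃ h ∈ H, ∃ b ∈ B, g = h * b) ∧ H ⊓ B ≤ centerOf K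

/-- A group is quaternion-free if no section is isomorphic to the quaternion group `Q₈`. -/
def QuaternionFree (G : Type*) [Group G] : Prop :=
  ∀ (H : Subgroup G) (N : Subgroup H) [N.Normal], IsEmpty ((H ⧸ N) ≃* QuaternionGroup 2)

/-- the conjugate `P^x = x⁻¹ P x`. -/
def conjSub {G : Type*} [Group G] (P : Subgroup G) (x : G) : Subgroup G :=
  (MulAut.conj x⁻¹) • P

section Aux

variable {G₀ : Type*}


lemma my_sq_mem_frattini {E : Type*} [Group E] [Finite E] (h2 : IsPGroup 2 E) (g : E) :
    g ^ 2 ∈ frattini E := by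
  haveI : Fact (Nat.Prime 2) := ⟨Nat.prime_two⟩
  haveI : Group.IsNilpotent E := h2.isNilpotent
  have hnc : NormalizerCondition E := normalizerCondition_of_isNilpotent
  simp only [frattini, Order.radical, Subgroup.mem_iInf]
  intro M hM
  haveI hMn : M.Normal := Subgroup.NormalizerCondition.normal_of_coatom M hnc hM
  -- subgroups of the quotient are trivial
  have hsub : ∀ S : Subgroup (E ⧸ M), S = ⊥ ∨ S = ⊤ := by
    intro S
    have hle : M ≤ S.comap (QuotientGroup.mk' M) := by
      intro m hm
      have h1 : (QuotientGroup.mk' M) m = 1 := (QuotientGroup.eq_one_iff m).mpr hm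
      rw [Subgroup.mem_comap, h1]
      exact S.one_mem
    rcases hle.lt_or_eq with hlt | heq
    · right
      have htop : S.comap (QuotientGroup.mk' M) = ⊤ := hM.2 _ hlt
      have hmap := congrArg (Subgroup.map (QuotientGroup.mk' M)) htop
      rwa [Subgroup.map_comap_eq_self_of_surjective (QuotientGroup.mk'_surjective M),
        Subgroup.map_top_of_surjective _ (QuotientGroup.mk'_surjective M)] at hmap
    · left
      have hmap := congrArg (Subgroup.map (QuotientGroup.mk' M)) heq
      rw [Subgroup.map_comap_eq_self_of_surjective (QuotientGroup.mk'_surjective M)] at hmap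
      rw [← hmap]
      ext q
      simp only [Subgroup.mem_map, Subgroup.mem_bot]
      constructor
      · rintro ⟨m, hm, rfl⟩
        exact (QuotientGroup.eq_one_iff m).mpr hm
      · rintro rfl
        exact ⟨1, M.one_mem, map_one _⟩
  -- every element of the quotient squares to 1
  have hq2 : ∀ q : E ⧸ M, q ^ 2 = 1 := by
    intro q
    by_contra hq
    have hz : Subgroup.zpowers (q ^ 2) ≠ ⊥ := by
      simp [Subgroup.zpowers_eq_bot, hq]
    have htop : Subgroup.zpowers (q ^ 2) = ⊤ := (hsub _).resolve_left hz
    have hqmem : q ∈ Subgroup.zpowers (q ^ 2) := htop ▸ Subgroup.mem_top q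
    obtain ⟨k, hk⟩ := hqmem
    -- (q^2)^k = q, so q^(2k - 1) = 1
    have h1 : q ^ (2 * k - 1) = 1 := by
      have h0 : (q ^ 2) ^ k = q := hk
      rw [← zpow_natCast q 2, ← zpow_mul] at h0
      push_cast at h0
      rw [zpow_sub, zpow_one, h0, mul_inv_cancel]
    have hodd : Odd (2 * k - 1) := ⟨k - 1, by ring⟩
    have hdvd1 : (orderOf q : ℤ) ∣ 2 * k - 1 := orderOf_dvd_iff_zpow_eq_one.mpr h1
    obtain ⟨n, hn⟩ := (h2.to_quotient M) q
    have hdvd2 : orderOf q ∣ 2 ^ n := orderOf_dvd_of_pow_eq_one hn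
    have hdvd1' : orderOf q ∣ (2 * k - 1).natAbs := by
      have := Int.natAbs_dvd_natAbs.mpr hdvd1
      simpa using this
    have hcop : Nat.Coprime (2 ^ n) (2 * k - 1).natAbs := by
      apply Nat.Coprime.pow_left
      exact Nat.coprime_comm.mp (Nat.coprime_two_right.mpr (Int.natAbs_odd.mpr hodd))
    have hd : orderOf q ∣ 1 := hcop ▸ Nat.dvd_gcd hdvd2 hdvd1'
    have : q = 1 := orderOf_eq_one_iff.mp (Nat.dvd_one.mp hd)
    rw [this] at hq
    exact hq (one_pow 2)
  have := hq2 ((QuotientGroup.mk' M) g)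
  rw [← map_pow] at this
  exact (QuotientGroup.eq_one_iff _).mp this


/-- the candidate map from Q8 to a group generated by suitable x, y -/
def q8map {G : Type*} [Group G] (x y : G) : QuaternionGroup 2 → G
  | .a i => x ^ i.val
  | .xa i => y * x ^ i.val

section q8
variable {G : Type*} [Group G] {x y : G}

lemma q8_hpy (hyx : x * y = y * x⁻¹) : ∀ m : ℕ, x ^ m * y = y * (x⁻¹) ^ m := by
  intro m
  induction m with
  | zero => simp
  | succ k ih =>
    calc x ^ (k + 1) * y = x ^ k * (x * y) := by rw [pow_succ, mul_assoc]
      _ = x ^ k * (y * x⁻¹) := by rw [hyx]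
      _ = (x ^ k * y) * x⁻¹ := by rw [mul_assoc]
      _ = y * (x⁻¹) ^ k * x⁻¹ := by rw [ih]
      _ = y * (x⁻¹) ^ (k + 1) := by rw [mul_assoc, ← pow_succ]

lemma q8_hmod (hx4 : x ^ 4 = 1) : ∀ m : ℕ, x ^ (m % 4) = x ^ m := by
  intro m
  conv_rhs => rw [← Nat.div_add_mod m 4]
  rw [pow_add, pow_mul, hx4, one_pow, one_mul]

lemma q8_hvadd (hx4 : x ^ 4 = 1) (i j : ZMod (2 * 2)) :
    x ^ (i + j).val = x ^ i.val * x ^ j.val := by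
  haveI : NeZero (2 * 2) := ⟨by norm_num⟩
  rw [ZMod.val_add]
  show x ^ ((i.val + j.val) % 4) = x ^ i.val * x ^ j.val
  rw [q8_hmod hx4, pow_add]

lemma q8_e1 (hx4 : x ^ 4 = 1) (i j : ZMod (2 * 2)) :
    x ^ (j - i).val = (x ^ i.val)⁻¹ * x ^ j.val := by
  rw [eq_inv_mul_iff_mul_eq, ← q8_hvadd hx4]
  congr 1
  ring_nf

lemma q8map_hom (hx4 : x ^ 4 = 1) (h2 : y ^ 2 = x ^ 2) (hyx : x * y = y * x⁻¹)
    (q r : QuaternionGroup 2) : q8map x y (q * r) = q8map x y q * q8map x y r := by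
  rcases q with i | i <;> rcases r with j | j
  · rw [QuaternionGroup.a_mul_a]
    show x ^ (i + j).val = x ^ i.val * x ^ j.val
    exact q8_hvadd hx4 i j
  · rw [QuaternionGroup.a_mul_xa]
    show y * x ^ (j - i).val = x ^ i.val * (y * x ^ j.val)
    calc y * x ^ (j - i).val = y * ((x ^ i.val)⁻¹ * x ^ j.val) := by rw [q8_e1 hx4]
      _ = (y * (x⁻¹) ^ i.val) * x ^ j.val := by rw [inv_pow, mul_assoc]
      _ = (x ^ i.val * y) * x ^ j.val := by rw [← q8_hpy hyx]
      _ = x ^ i.val * (y * x ^ j.val) := by rw [mul_assoc]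
  · rw [QuaternionGroup.xa_mul_a]
    show y * x ^ (i + j).val = (y * x ^ i.val) * x ^ j.val
    rw [q8_hvadd hx4, mul_assoc]
  · rw [QuaternionGroup.xa_mul_xa]
    show x ^ (((2 : ℕ) : ZMod (2 * 2)) + j - i).val = (y * x ^ i.val) * (y * x ^ j.val)
    have hc : (((2 : ℕ) : ZMod (2 * 2))).val = 2 := rfl
    calc x ^ (((2 : ℕ) : ZMod (2 * 2)) + j - i).val
        = x ^ (((2 : ℕ) : ZMod (2 * 2)) + (j - i)).val := by rw [add_sub_assoc]
      _ = x ^ 2 * x ^ (j - i).val := by rw [q8_hvadd hx4, hc]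
      _ = y ^ 2 * ((x ^ i.val)⁻¹ * x ^ j.val) := by rw [h2, q8_e1 hx4]
      _ = y * ((y * (x⁻¹) ^ i.val) * x ^ j.val) := by
          rw [pow_two, inv_pow, mul_assoc, mul_assoc]
      _ = y * ((x ^ i.val * y) * x ^ j.val) := by rw [← q8_hpy hyx]
      _ = (y * x ^ i.val) * (y * x ^ j.val) := by
          simp only [mul_assoc]

lemma q8map_inj (hx4 : x ^ 4 = 1) (hxo : orderOf x = 4) (hynp : ∀ m : ℕ, y ≠ x ^ m) :
    Function.Injective (q8map x y) := by
  haveI : NeZero (2 * 2) := ⟨by norm_num⟩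
  have hpowinj : ∀ i j : ZMod (2 * 2), x ^ i.val = x ^ j.val → i = j := by
    intro i j h
    rw [pow_eq_pow_iff_modEq, hxo] at h
    have h1 : i.val % 4 = j.val % 4 := h
    rw [Nat.mod_eq_of_lt (i.val_lt), Nat.mod_eq_of_lt (j.val_lt)] at h1
    exact ZMod.val_injective _ h1
  have hxinv : x⁻¹ = x ^ 3 := by
    apply inv_eq_of_mul_eq_one_right
    rw [← pow_succ']
    norm_num
    exact hx4
  intro q r
  rcases q with i | i <;> rcases r with j | j <;> intro h
  · exact congrArg QuaternionGroup.a (hpowinj i j h)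
  · exfalso
    replace h : x ^ i.val = y * x ^ j.val := h
    have : y = x ^ (i.val + 3 * j.val) := by
      calc y = x ^ i.val * (x ^ j.val)⁻¹ := (eq_mul_inv_of_mul_eq h.symm)
        _ = x ^ i.val * (x⁻¹) ^ j.val := by rw [inv_pow]
        _ = x ^ i.val * (x ^ 3) ^ j.val := by rw [hxinv]
        _ = x ^ (i.val + 3 * j.val) := by rw [← pow_mul, ← pow_add]
    exact hynp _ this
  · exfalso
    replace h : y * x ^ i.val = x ^ j.val := h
    have : y = x ^ (j.val + 3 * i.val) := by
      calc y = x ^ j.val * (x ^ i.val)⁻¹ := (eq_mul_inv_of_mul_eq h)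
        _ = x ^ j.val * (x⁻¹) ^ i.val := by rw [inv_pow]
        _ = x ^ j.val * (x ^ 3) ^ i.val := by rw [hxinv]
        _ = x ^ (j.val + 3 * i.val) := by rw [← pow_mul, ← pow_add]
    exact hynp _ this
  · replace h : y * x ^ i.val = y * x ^ j.val := h
    exact congrArg QuaternionGroup.xa (hpowinj i j (mul_left_cancel h))

end q8

end Aux

open scoped commutatorElement

/-- every extraspecial 2-group of order at least `2^5` has a section
isomorphic to `Q₈`, i.e. it is not quaternion-free. -/
theorem stmt4 (E : Type*) [Group E] [Finite E] (h2 : IsPGroup 2 E)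
    (hZC : Subgroup.center E = commutator E) (hZF : Subgroup.center E = frattini E)
    (hZ2 : Nat.card (Subgroup.center E) = 2) (hbig : 2 ^ 5 ≤ Nat.card E) :
    ¬ QuaternionFree E := by
  intro hQF
  -- the central element z
  obtain ⟨z₀, hz₀ne, hz₀uniq⟩ := (Nat.card_eq_two_iff' (1 : Subgroup.center E)).mp hZ2
  set z : E := (z₀ : E) with hzdef
  have hzmem : z ∈ Subgroup.center E := z₀.2
  have hzne : z ≠ 1 := fun h => hz₀ne (Subtype.ext h)
  have hZcases : ∀ w ∈ Subgroup.center E, w = 1 ∨ w = z := by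
    intro w hw
    by_cases h : (⟨w, hw⟩ : Subgroup.center E) = 1
    · left; exact congrArg Subtype.val h
    · right; exact congrArg Subtype.val (hz₀uniq ⟨w, hw⟩ h)
  have hzcomm : ∀ g : E, g * z = z * g := fun g => (Subgroup.mem_center_iff.mp hzmem g)
  have hz2 : z * z = 1 := by
    have hmem : z * z ∈ Subgroup.center E := (Subgroup.center E).mul_mem hzmem hzmem
    rcases hZcases _ hmem with h | h
    · exact h
    · exact ((hzne (mul_eq_left.mp h))).elim
  -- squares and commutators are central
  have hsq : ∀ g : E, g ^ 2 ∈ Subgroup.center E := fun g => hZF ▸ my_sq_mem_frattini h2 g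
  have hcomm : ∀ g h : E, ⁅g, h⁆ ∈ Subgroup.center E := by
    intro g h
    rw [hZC, _root_.commutator_def]
    exact Subgroup.commutator_mem_commutator (Subgroup.mem_top g) (Subgroup.mem_top h)
  have hsqv : ∀ g : E, g ^ 2 = 1 ∨ g ^ 2 = z := fun g => hZcases _ (hsq g)
  have hcommv : ∀ g h : E, ⁅g, h⁆ = 1 ∨ ⁅g, h⁆ = z := fun g h => hZcases _ (hcomm g h)
  -- symmetry of commutators
  have hsymm : ∀ g h : E, ⁅g, h⁆ = ⁅h, g⁆ := by
    intro g h
    rcases hcommv g h with h1 | h1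
    · rw [h1, ← commutatorElement_inv, h1, inv_one]
    · rw [h1, ← commutatorElement_inv, h1, eq_comm, inv_eq_iff_mul_eq_one, hz2]
  -- multiplication of squares
  have hD : ∀ g h : E, (g * h) ^ 2 = ⁅h, g⁆ * (g ^ 2 * h ^ 2) := by
    intro g h
    have hc : g * ⁅h, g⁆ = ⁅h, g⁆ * g := (Subgroup.mem_center_iff.mp (hcomm h g) g)
    have key : (g * h) * (g * h) = (g * ⁅h, g⁆) * (g * (h * h)) := by
      simp only [commutatorElement_def]
      group
    rw [pow_two, key, hc, pow_two, pow_two]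
    simp only [mul_assoc]
  -- bilinearity
  have hbil : ∀ g a b : E, ⁅g, a * b⁆ = ⁅g, a⁆ * ⁅g, b⁆ := by
    intro g a b
    have hc : a * ⁅g, b⁆ = ⁅g, b⁆ * a := (Subgroup.mem_center_iff.mp (hcomm g b) a)
    have h1 : ⁅g, a * b⁆ = ⁅g, a⁆ * (a * ⁅g, b⁆ * a⁻¹) := by
      simp only [commutatorElement_def]
      group
    rw [h1, hc, mul_assoc ⁅g, b⁆ a a⁻¹, mul_inv_cancel, mul_one]
  have hbil' : ∀ g a b : E, ⁅a * b, g⁆ = ⁅a, g⁆ * ⁅b, g⁆ := by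
    intro g a b
    rw [← hsymm, hbil, hsymm g a, hsymm g b]
  -- Step 1 : an element of square z
  have step1 : ∃ x : E, x ^ 2 = z := by
    by_contra hno
    push_neg at hno
    have hsq1 : ∀ g : E, g ^ 2 = 1 := fun g => (hsqv g).resolve_right (hno g)
    have hab : ∀ g h : E, ⁅h, g⁆ = 1 := by
      intro g h
      have hh := hD g h
      rw [hsq1 (g * h), hsq1 g, hsq1 h, one_mul, mul_one] at hh
      exact hh.symm
    have hcent : Subgroup.center E = ⊤ := by
      rw [eq_top_iff]
      intro g _
      rw [Subgroup.mem_center_iff]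
      intro h
      exact (commutatorElement_eq_one_iff_mul_comm.mp (hab g h))
    rw [hcent, Subgroup.card_top] at hZ2
    omega
  obtain ⟨x, hx2⟩ := step1
  have hx4 : x ^ 4 = 1 := by
    rw [show (4 : ℕ) = 2 + 2 from rfl, pow_add, hx2, hz2]
  have hxz : x⁻¹ = x * z := by
    apply inv_eq_of_mul_eq_one_right
    rw [← mul_assoc, ← pow_two, hx2, hz2]
  have hxnotc : x ∉ Subgroup.center E := by
    intro hmem
    rcases hZcases x hmem with h | h
    · rw [h, one_pow] at hx2; exact hzne hx2.symm
    · rw [h, pow_two, hz2] at hx2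
      exact hzne hx2.symm
  -- Step 3
  have step3 : ∃ y : E, y ^ 2 = z ∧ ⁅x, y⁆ = z := by
    by_contra hno
    push_neg at hno
    have hno' : ∀ y : E, y ^ 2 = z → ⁅x, y⁆ = 1 :=
      fun y hy => (hcommv x y).resolve_right (hno y hy)
    obtain ⟨t, ht⟩ : ∃ t : E, ⁅x, t⁆ = z := by
      by_contra hc
      push_neg at hc
      have hall : ∀ t : E, ⁅x, t⁆ = 1 := fun t => (hcommv x t).resolve_right (hc t)
      apply hxnotc
      rw [Subgroup.mem_center_iff]
      intro g
      exact (commutatorElement_eq_one_iff_mul_comm.mp (hall g)).symm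
    -- central elements of the "kernel"
    have hker_cent : ∀ c : E, ⁅x, c⁆ = 1 → c ^ 2 = 1 → c ∈ Subgroup.center E := by
      intro c hcx hc2
      have hout : ∀ w : E, ⁅x, w⁆ = z → ⁅w, c⁆ = 1 := by
        intro w hw
        have hw2 : w ^ 2 = 1 := by
          rcases hsqv w with h | h
          · exact h
          · exact absurd hw (by rw [hno' w h]; exact fun e => hzne e.symm)
        have h1 : ⁅x, c * w⁆ = z := by rw [hbil, hcx, one_mul, hw]
        have h2 : (c * w) ^ 2 = 1 := by
          rcases hsqv (c * w) with h | h
          · exact h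
          · exact absurd h1 (by rw [hno' _ h]; exact fun e => hzne e.symm)
        have h3 := hD c w
        rw [h2, hc2, hw2, one_mul, mul_one] at h3
        exact h3.symm
      have hin : ∀ s : E, ⁅x, s⁆ = 1 → ⁅s, c⁆ = 1 := by
        intro s hs
        have h1 : ⁅x, t * s⁆ = z := by rw [hbil, ht, hs, mul_one]
        have h2 := hout _ h1
        rw [hbil' c t s, hout t ht, one_mul] at h2
        exact h2
      rw [Subgroup.mem_center_iff]
      intro g
      have hgc : ⁅g, c⁆ = 1 := by
        rcases hcommv x g with h | h
        · exact hin g h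
        · exact hout g h
      exact commutatorElement_eq_one_iff_mul_comm.mp hgc
    -- kernel elements are in {1, z, x, x*z}
    have hker_small : ∀ c : E, ⁅x, c⁆ = 1 → c ∈ ({1, z, x, x * z} : Set E) := by
      intro c hcx
      simp only [Set.mem_insert_iff, Set.mem_singleton_iff]
      rcases hsqv c with hc2 | hc2
      · rcases hZcases c (hker_cent c hcx hc2) with h | h
        · exact Or.inl h
        · exact Or.inr (Or.inl h)
      · have hdx : ⁅x, x * c⁆ = 1 := by
          rw [hbil, commutatorElement_self, hcx, one_mul]
        have hd2 : (x * c) ^ 2 = 1 := by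
          have h3 := hD x c
          rw [hsymm c x] at h3
          rw [h3, hcx, one_mul, hx2, hc2, hz2]
        rcases hZcases _ (hker_cent (x * c) hdx hd2) with h | h
        · -- x * c = 1, so c = x⁻¹ = x * z
          right; right; right
          have hcx' : c = x⁻¹ := by
            rw [← one_mul c, ← inv_mul_cancel x, mul_assoc, h, mul_one]
          exact hcx'.trans hxz
        · -- x * c = z, so c = x⁻¹ * z = x * z * z = x
          right; right; left
          have : c = x⁻¹ * z := by
            rw [eq_inv_mul_iff_mul_eq, h]
          rw [this, hxz, mul_assoc, hz2, mul_one]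
    -- cardinality contradiction
    let ψ : E →* E := MonoidHom.mk' (fun g => ⁅x, g⁆) (fun a b => hbil x a b)
    have hrange : ψ.range ≤ Subgroup.center E := by
      rintro w ⟨g, rfl⟩
      exact hcomm x g
    have hcard1 : Nat.card E = Nat.card (E ⧸ ψ.ker) * Nat.card ψ.ker :=
      Subgroup.card_eq_card_quotient_mul_card_subgroup ψ.ker
    have hcard2 : Nat.card (E ⧸ ψ.ker) ≤ 2 := by
      rw [Nat.card_congr (QuotientGroup.quotientKerEquivRange ψ).toEquiv]
      calc Nat.card ψ.range ≤ Nat.card (Subgroup.center E) := Subgroup.card_le_of_le hrange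
        _ = 2 := hZ2
    have hsubset : (ψ.ker : Set E) ⊆ ({1, z, x, x * z} : Set E) := by
      intro c hc
      exact hker_small c hc
    have hcard3 : Nat.card ψ.ker ≤ 4 := by
      have h1 : Nat.card ψ.ker = (ψ.ker : Set E).ncard := (Nat.card_coe_set_eq _)
      rw [h1]
      calc (ψ.ker : Set E).ncard ≤ ({1, z, x, x * z} : Set E).ncard :=
            Set.ncard_le_ncard hsubset (Set.toFinite _)
        _ ≤ ({z, x, x * z} : Set E).ncard + 1 := Set.ncard_insert_le _ _
        _ ≤ (({x, x * z} : Set E).ncard + 1) + 1 := by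
            exact Nat.add_le_add_right (Set.ncard_insert_le _ _) 1
        _ ≤ ((({x * z} : Set E).ncard + 1) + 1) + 1 := by
            exact Nat.add_le_add_right (Nat.add_le_add_right (Set.ncard_insert_le _ _) 1) 1
        _ = 4 := by rw [Set.ncard_singleton]
    have : (32 : ℕ) ≤ 2 * 4 := by
      calc (32 : ℕ) = 2 ^ 5 := by norm_num
        _ ≤ Nat.card E := hbig
        _ = Nat.card (E ⧸ ψ.ker) * Nat.card ψ.ker := hcard1
        _ ≤ 2 * 4 := Nat.mul_le_mul hcard2 hcard3
    omega
  obtain ⟨y, hy2, hxy⟩ := step3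
  -- Step 4 : build Q8 inside E
  have hyx : x * y = y * x⁻¹ := by
    have h := hxy
    rw [commutatorElement_def] at h
    have h1 : x * y = z * (y * x) := by
      rw [← h]; group
    rw [h1, hxz]
    calc z * (y * x) = (y * x) * z := (hzcomm (y * x)).symm
      _ = y * (x * z) := by rw [mul_assoc]
  have hy2x2 : y ^ 2 = x ^ 2 := by rw [hy2, hx2]
  have hxo : orderOf x = 4 := by
    have hdvd : orderOf x ∣ 4 := orderOf_dvd_of_pow_eq_one hx4
    have hnot2 : ¬ (orderOf x ∣ 2) := by
      intro h
      have := orderOf_dvd_iff_pow_eq_one.mp h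
      rw [hx2] at this
      exact hzne this
    have h22 : (4 : ℕ) = 2 ^ 2 := by norm_num
    rw [h22] at hdvd
    obtain ⟨i, hi, hoi⟩ := (Nat.dvd_prime_pow Nat.prime_two).mp hdvd
    interval_cases i
    · exfalso; apply hnot2; rw [hoi]; norm_num
    · exfalso; apply hnot2; rw [hoi]; norm_num
    · rw [hoi]; norm_num
  have hynp : ∀ m : ℕ, y ≠ x ^ m := by
    intro m hy
    have hcxy : x * y = y * x := by
      rw [hy]; exact ((Commute.refl x).pow_right m).eq
    have heq : x = x⁻¹ := mul_left_cancel (hcxy.symm.trans hyx)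
    have hx21 : x ^ 2 = 1 := by
      rw [pow_two]
      calc x * x = x * x⁻¹ := congrArg (x * ·) heq
        _ = 1 := mul_inv_cancel x
    rw [hx2] at hx21
    exact hzne hx21
  let f : QuaternionGroup 2 →* E := MonoidHom.mk' (q8map x y) (q8map_hom hx4 hy2x2 hyx)
  have hfinj : Function.Injective f := q8map_inj hx4 hxo hynp
  have e : ((f.range) ⧸ (⊥ : Subgroup f.range)) ≃* QuaternionGroup 2 :=
    (QuotientGroup.quotientBot).trans (MulEquiv.symm (MonoidHom.ofInjective hfinj))
  exact (hQF f.range ⊥).false e
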